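/- A linear operator H on a finite-dimensional complex inner-product space with a complete set of eigenvectors has a real spectrum if and only if there exists a positive-definite operator η such that H†η = ηH. -/

import Mathlib

/-- A diagonalizable linear operator H on a finite-dimensional complex inner-product
space has a real spectrum iff there is a positive-definite operator η with H†η = ηH. -/
theorem stmt_4 {V : Type*} [NormedAddCommGroup V] [InnerProductSpace ℂ V]
    [FiniteDimensional ℂ V]
    (H : V →ₗ[ℂ] V) {n : ℕ} (b : Module.Basis (Fin n) ℂ V)
    (hdiag : ∀ i, ∃ μ : ℂ, H (b i) = μ • b i) :
    (∀ μ : ℂ, Module.End.HasEigenvalue H μ → μ.im = 0) ↔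
      ∃ η : V →ₗ[ℂ] V,
        (∀ v w : V, (inner ℂ (η v) w : ℂ) = inner ℂ v (η w)) ∧
        (∀ v : V, v ≠ 0 → 0 < (inner ℂ v (η v) : ℂ).re) ∧
        Function.Bijective η ∧
        (LinearMap.adjoint H) ∘ₗ η = η ∘ₗ H := by
  constructor
  · intro hre
    have hn : Module.finrank ℂ V = n := by
      rw [Module.finrank_eq_card_basis b, Fintype.card_fin]
    let e : OrthonormalBasis (Fin n) ℂ V :=
      (stdOrthonormalBasis ℂ V).reindex (finCongr hn)
    let A : V ≃ₗ[ℂ] V := b.equiv e.toBasis (Equiv.refl _)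
    set A' : V →ₗ[ℂ] V := (A : V →ₗ[ℂ] V) with hA'
    have hA : ∀ i, A' (b i) = e i := fun i => by
      simp [hA', A, Module.Basis.equiv_apply]
    set η : V →ₗ[ℂ] V := (LinearMap.adjoint A') ∘ₗ A' with hη
    have hinner : ∀ v w : V, (inner ℂ v (η w) : ℂ) = inner ℂ (A' v) (A' w) := by
      intro v w
      simp [hη, LinearMap.adjoint_inner_right]
    have hAne : ∀ v : V, v ≠ 0 → A' v ≠ 0 := by
      intro v hv
      simpa [hA'] using (A.map_ne_zero_iff).mpr hv
    refine ⟨η, ?_, ?_, ?_, ?_⟩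
    · intro v w
      simp [hη, LinearMap.adjoint_inner_left, LinearMap.adjoint_inner_right]
    · intro v hv
      rw [hinner v v]
      have h := inner_self_eq_norm_sq (𝕜 := ℂ) (A' v)
      rw [RCLike.re_to_complex] at h
      rw [h]
      exact pow_pos (norm_pos_iff.mpr (hAne v hv)) 2
    · have hinj : Function.Injective η := by
        rw [← LinearMap.ker_eq_bot, LinearMap.ker_eq_bot']
        intro v hv
        by_contra h
        have := hinner v v
        rw [hv, inner_zero_right] at this
        have h2 : A' v = 0 := by
          have := inner_self_eq_zero.mp this.symm
          exact this
        exact hAne v h h2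
      exact ⟨hinj, (LinearMap.injective_iff_surjective).mp hinj⟩
    · refine b.ext fun j => ?_
      refine InnerProductSpace.ext_inner_left_basis b fun i => ?_
      obtain ⟨μi, hμi⟩ := hdiag i
      obtain ⟨μj, hμj⟩ := hdiag j
      have him_i : μi.im = 0 := hre μi
        (Module.End.hasEigenvalue_of_hasEigenvector
          ⟨Module.End.mem_eigenspace_iff.mpr hμi, b.ne_zero i⟩)
      have him_j : μj.im = 0 := hre μj
        (Module.End.hasEigenvalue_of_hasEigenvector
          ⟨Module.End.mem_eigenspace_iff.mpr hμj, b.ne_zero j⟩)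
      have hee : (inner ℂ (e i) (e j) : ℂ) = if i = j then 1 else 0 :=
        orthonormal_iff_ite.mp e.orthonormal i j
      have hL : (inner ℂ (b i) (((LinearMap.adjoint H) ∘ₗ η) (b j)) : ℂ)
          = (starRingEnd ℂ) μi * (if i = j then 1 else 0) := by
        rw [LinearMap.comp_apply, LinearMap.adjoint_inner_right, hinner,
          hμi, map_smul, hA, hA, inner_smul_left, hee]
      have hR : (inner ℂ (b i) ((η ∘ₗ H) (b j)) : ℂ)
          = μj * (if i = j then 1 else 0) := by
        rw [LinearMap.comp_apply, hinner, hμj, map_smul, hA, hA,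
          inner_smul_right, hee]
      rw [hL, hR]
      by_cases h : i = j
      · subst h
        have hij : μi = μj := smul_left_injective ℂ (b.ne_zero _) (hμi.symm.trans hμj)
        subst hij
        simp [Complex.conj_eq_iff_im.mpr him_i]
      · simp [h]
  · rintro ⟨η, hsym, hpos, hbij, hcomm⟩ μ hμ
    obtain ⟨v, hv⟩ := hμ.exists_hasEigenvector
    have hveq : H v = μ • v := hv.apply_eq_smul
    have hne : (inner ℂ v (η v) : ℂ) ≠ 0 := by
      intro h
      have := hpos v hv.right
      rw [h] at this
      simp at this
    have h1 : (inner ℂ v (η (H v)) : ℂ) = μ * inner ℂ v (η v) := by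
      rw [hveq, map_smul, inner_smul_right]
    have h2 : (inner ℂ v (η (H v)) : ℂ) = (starRingEnd ℂ) μ * inner ℂ v (η v) := by
      have : η (H v) = (LinearMap.adjoint H) (η v) := by
        have := congrFun (congrArg DFunLike.coe hcomm) v
        simpa using this.symm
      rw [this, LinearMap.adjoint_inner_right, hveq, inner_smul_left]
    have hconj : (starRingEnd ℂ) μ = μ := by
      have := h1.symm.trans h2
      exact (mul_right_cancel₀ hne this).symm
    exact (Complex.conj_eq_iff_im.mp hconj)
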